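/- arXiv:2103.07305 — 2 statements merged into one kernel-verified Lean document; each statement's English description precedes it below -/
import Mathlib

section
/- Let R be a commutative ring and C a finite étale R-algebra of constant rank N ≥ 1. Then the diagonal multiplication map C ⊗_R C → C induces a decomposition C ⊗_R C ≅ C × C' of C-algebras, where C' is a finite étale C-algebra of constant rank N − 1. -/
open scoped TensorProduct

set_option maxHeartbeats 1600000
set_option synthInstance.maxHeartbeats 400000

lemma rankAtStalk_eq_finrank_tensor (C : Type) [CommRing C] (M : Type) [AddCommGroup M]
    [Module C M] (q : PrimeSpectrum C) :
    Module.rankAtStalk M q =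
      Module.finrank (Localization.AtPrime q.asIdeal) (Localization.AtPrime q.asIdeal ⊗[C] M) :=
  (LinearEquiv.finrank_eq
    ((IsLocalizedModule.isBaseChange q.asIdeal.primeCompl (Localization.AtPrime q.asIdeal)
      (LocalizedModule.mkLinearMap q.asIdeal.primeCompl M)).equiv)).symm

/-- `prodRight` as an equivalence linear over the algebra `Cq`. -/
noncomputable def prodRightBase (C Cq M N : Type) [CommRing C] [CommRing Cq] [Algebra C Cq]
    [AddCommGroup M] [Module C M] [AddCommGroup N] [Module C N] :
    (Cq ⊗[C] (M × N)) ≃ₗ[Cq] (Cq ⊗[C] M) × (Cq ⊗[C] N) := by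
  refine AddEquiv.toLinearEquiv (TensorProduct.prodRight C C Cq M N).toAddEquiv ?_
  intro c x
  show (TensorProduct.prodRight C C Cq M N) (c • x) = c • (TensorProduct.prodRight C C Cq M N) x
  induction x using TensorProduct.induction_on with
  | zero => simp
  | tmul a m =>
      rw [TensorProduct.smul_tmul']
      obtain ⟨m, n⟩ := m
      simp [TensorProduct.smul_tmul', Prod.smul_def]
  | add x y hx hy => rw [smul_add, map_add, hx, hy, map_add, smul_add]

/-- For a finite étale `R`-algebra `C` of constant rank `N ≥ 1`, the
`C`-algebra `C ⊗[R] C` (via the left factor) decomposes as `C × C'` where `C'` is a finite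
étale `C`-algebra of constant rank `N - 1`, the projection to the first factor being the
multiplication map `x ⊗ y ↦ x * y`. -/
theorem tensor_self_decomposition_of_finite_etale
    (R C : Type) [CommRing R] [CommRing C] [Algebra R C]
    [Algebra.Etale R C] [Module.Finite R C] [Module.Projective R C]
    (N : ℕ) (hN : 1 ≤ N)
    (hrank : ∀ p : PrimeSpectrum R, Module.rankAtStalk C p = N) :
    ∃ (C' : Type) (_ : CommRing C') (_ : Algebra C C'),
      Algebra.Etale C C' ∧ Module.Finite C C' ∧ Module.Projective C C' ∧
      (∀ q : PrimeSpectrum C, Module.rankAtStalk C' q = N - 1) ∧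
      ∃ e : (C ⊗[R] C) ≃ₐ[C] C × C', ∀ x y : C, (e (x ⊗ₜ[R] y)).1 = x * y := by
  classical
  -- the multiplication map
  let μ : C ⊗[R] C →ₐ[C] C := Algebra.TensorProduct.lmul'' R
  have hμ : ∀ x y : C, μ (x ⊗ₜ[R] y) = x * y := fun x y => rfl
  have hμsurj : Function.Surjective μ := fun x => ⟨x ⊗ₜ 1, by simp [hμ]⟩
  have hkerμ : RingHom.ker μ.toRingHom = KaehlerDifferential.ideal R C := rfl
  -- the idempotent generating the kernel
  have hidem : IsIdempotentElem (KaehlerDifferential.ideal R C) := by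
    have : Subsingleton (Ω[C⁄R]) := inferInstance
    rw [KaehlerDifferential] at this
    exact (Ideal.cotangent_subsingleton_iff _).mp this
  obtain ⟨e₀, he₀, hspan⟩ :=
    (Ideal.isIdempotentElem_iff_of_fg _ (KaehlerDifferential.ideal_fg R C)).mp hidem
  set J : Ideal (C ⊗[R] C) := Ideal.span {1 - e₀} with hJ
  have he₁ : IsIdempotentElem (1 - e₀) := he₀.one_sub
  -- C' is the quotient by the complementary idempotent
  refine ⟨(C ⊗[R] C) ⧸ J, inferInstance, inferInstance, ?_⟩
  -- the decomposition
  let Φ : (C ⊗[R] C) →ₐ[C] C × ((C ⊗[R] C) ⧸ J) := μ.prod (Ideal.Quotient.mkₐ C J)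
  have hμe₀ : μ e₀ = 0 := by
    have : e₀ ∈ RingHom.ker μ.toRingHom := by
      rw [hkerμ, hspan]; exact Ideal.mem_span_singleton_self _
    exact this
  have hbij : Function.Bijective Φ := by
    constructor
    · intro x y hxy
      have h1 : μ (x - y) = 0 := by
        have : μ x = μ y := congrArg Prod.fst hxy
        rw [map_sub, this, sub_self]
      have h2 : x - y ∈ J := by
        have h : Ideal.Quotient.mk J x = Ideal.Quotient.mk J y := congrArg Prod.snd hxy
        exact Ideal.Quotient.mk_eq_mk_iff_sub_mem x y |>.mp h
      set z := x - y with hz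
      have hx1 : z ∈ KaehlerDifferential.ideal R C := by rw [← hkerμ]; exact h1
      rw [hspan] at hx1
      obtain ⟨a, ha⟩ := Ideal.mem_span_singleton.mp hx1
      obtain ⟨b, hb⟩ := Ideal.mem_span_singleton.mp h2
      have hxe : z * e₀ = z := by
        calc z * e₀ = (e₀ * e₀) * a := by rw [ha]; ring
        _ = e₀ * a := by rw [he₀.eq]
        _ = z := ha.symm
      have hxe' : z * e₀ = 0 := by
        calc z * e₀ = b * (e₀ - e₀ * e₀) := by rw [hb]; ring
        _ = 0 := by rw [he₀.eq]; ring
      have : z = 0 := by rw [← hxe, hxe']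
      exact sub_eq_zero.mp this
    · rintro ⟨c, y'⟩
      obtain ⟨x, hx⟩ := hμsurj c
      obtain ⟨y, rfl⟩ := Ideal.Quotient.mk_surjective y'
      refine ⟨x * (1 - e₀) + y * e₀, Prod.ext ?_ ?_⟩
      · show μ _ = c
        rw [map_add, map_mul, map_mul, map_sub, map_one, hμe₀, hx]
        ring
      · show Ideal.Quotient.mk J _ = Ideal.Quotient.mk J y
        rw [Ideal.Quotient.mk_eq_mk_iff_sub_mem]
        have : x * (1 - e₀) + y * e₀ - y = (x - y) * (1 - e₀) := by ring
        rw [this]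
        exact Ideal.mul_mem_left _ _ (Ideal.mem_span_singleton_self _)
  let E := AlgEquiv.ofBijective Φ hbij
  -- instances on C'
  have hJfg : J.FG := ⟨{1 - e₀}, by simp [hJ]⟩
  haveI hfu : Algebra.FormallyUnramified C ((C ⊗[R] C) ⧸ J) :=
    Algebra.FormallyUnramified.of_surjective (Ideal.Quotient.mkₐ C J)
      Ideal.Quotient.mk_surjective
  have hkermk : RingHom.ker (Ideal.Quotient.mkₐ C J).toRingHom = J := Ideal.mk_ker
  have hJ2 : RingHom.ker (Ideal.Quotient.mkₐ C J).toRingHom ^ 2 = J := by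
    rw [hkermk, pow_two, hJ, Ideal.span_singleton_mul_span_singleton, he₁.eq]
  haveI hfs : Algebra.FormallySmooth C ((C ⊗[R] C) ⧸ J) := by
    refine Algebra.FormallySmooth.of_split (Ideal.Quotient.mkₐ C J)
      ((Ideal.quotientEquivAlgOfEq C hJ2.symm).toAlgHom) ?_
    apply AlgHom.ext
    intro x
    obtain ⟨y, rfl⟩ := Ideal.Quotient.mk_surjective x
    show (Ideal.Quotient.mkₐ C J).kerSquareLift
        ((Ideal.quotientEquivAlgOfEq C hJ2.symm) (Ideal.Quotient.mk J y)) = Ideal.Quotient.mk J y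
    rw [Ideal.quotientEquivAlgOfEq_mk]
    rfl
  haveI : Algebra.FormallyEtale C ((C ⊗[R] C) ⧸ J) :=
    Algebra.FormallyEtale.iff_formallyUnramified_and_formallySmooth.mpr ⟨hfu, hfs⟩
  haveI : Algebra.FinitePresentation C ((C ⊗[R] C) ⧸ J) :=
    Algebra.FinitePresentation.quotient hJfg
  haveI : Algebra.Etale C ((C ⊗[R] C) ⧸ J) := ⟨inferInstance, inferInstance⟩
  haveI : Module.Finite C ((C ⊗[R] C) ⧸ J) :=
    Module.Finite.of_surjective (Ideal.Quotient.mkₐ C J).toLinearMap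
      Ideal.Quotient.mk_surjective
  haveI : Module.Projective C ((C ⊗[R] C) ⧸ J) := by
    refine Module.Projective.of_split
      (E.symm.toLinearMap ∘ₗ LinearMap.inr C C ((C ⊗[R] C) ⧸ J))
      (LinearMap.snd C C ((C ⊗[R] C) ⧸ J) ∘ₗ E.toLinearMap) ?_
    apply LinearMap.ext
    intro x
    show (E (E.symm (0, x))).2 = x
    rw [AlgEquiv.apply_symm_apply]
  refine ⟨inferInstance, inferInstance, inferInstance, ?_, E, fun x y => rfl⟩
  -- rank computation
  intro q
  haveI : Nontrivial C := by
    rcases subsingleton_or_nontrivial C with h | h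
    · exact absurd (Subsingleton.elim q.asIdeal ⊤) q.2.ne_top
    · exact h
  set Cq := Localization.AtPrime q.asIdeal with hCq
  set p : PrimeSpectrum R := PrimeSpectrum.comap (algebraMap R C) q with hp
  set Rp := Localization.AtPrime p.asIdeal with hRp
  have hmap : ∀ y : p.asIdeal.primeCompl, IsUnit ((algebraMap R Cq) (y : R)) := by
    rintro ⟨x, hx⟩
    have hx' : algebraMap R C x ∈ q.asIdeal.primeCompl := hx
    rw [IsScalarTower.algebraMap_apply R C Cq]
    exact IsLocalization.map_units Cq (⟨algebraMap R C x, hx'⟩ : q.asIdeal.primeCompl)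
  letI : Algebra Rp Cq := (IsLocalization.lift (S := Rp) hmap).toAlgebra
  haveI : IsScalarTower R Rp Cq :=
    IsScalarTower.of_algebraMap_eq fun x => (IsLocalization.lift_eq hmap x).symm
  -- instances: freeness over the local rings
  haveI : Module.Finite Rp (Rp ⊗[R] C) := inferInstance
  haveI : Module.Projective Rp (Rp ⊗[R] C) := inferInstance
  haveI : Module.FinitePresentation Rp (Rp ⊗[R] C) := Module.finitePresentation_of_projective _ _
  haveI : Module.Flat Rp (Rp ⊗[R] C) := Module.Flat.of_projective
  haveI : Module.Free Rp (Rp ⊗[R] C) := Module.free_of_flat_of_isLocalRing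
  haveI : Module.Finite Cq (Cq ⊗[C] C) := inferInstance
  haveI : Module.Projective Cq (Cq ⊗[C] C) := inferInstance
  haveI : Module.FinitePresentation Cq (Cq ⊗[C] C) := Module.finitePresentation_of_projective _ _
  haveI : Module.Flat Cq (Cq ⊗[C] C) := Module.Flat.of_projective
  haveI : Module.Free Cq (Cq ⊗[C] C) := Module.free_of_flat_of_isLocalRing
  haveI : Module.Finite Cq (Cq ⊗[C] ((C ⊗[R] C) ⧸ J)) := inferInstance
  haveI : Module.Projective Cq (Cq ⊗[C] ((C ⊗[R] C) ⧸ J)) := inferInstance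
  haveI : Module.FinitePresentation Cq (Cq ⊗[C] ((C ⊗[R] C) ⧸ J)) :=
    Module.finitePresentation_of_projective _ _
  haveI : Module.Flat Cq (Cq ⊗[C] ((C ⊗[R] C) ⧸ J)) := Module.Flat.of_projective
  haveI : Module.Free Cq (Cq ⊗[C] ((C ⊗[R] C) ⧸ J)) := Module.free_of_flat_of_isLocalRing
  -- the rank of `C ⊗[R] C` over `C` at `q` is `N`
  have h4 : Module.finrank Cq (Cq ⊗[C] (C ⊗[R] C)) = N := by
    have e1 : (Cq ⊗[C] (C ⊗[R] C)) ≃ₗ[Cq] Cq ⊗[R] C :=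
      TensorProduct.AlgebraTensorModule.cancelBaseChange R C Cq Cq C
    have e2 : (Cq ⊗[R] C) ≃ₗ[Cq] Cq ⊗[Rp] (Rp ⊗[R] C) :=
      (TensorProduct.AlgebraTensorModule.cancelBaseChange R Rp Cq Cq C).symm
    have he1 : Module.finrank Cq (Cq ⊗[C] (C ⊗[R] C)) = Module.finrank Cq (Cq ⊗[R] C) :=
      LinearEquiv.finrank_eq e1
    have he2 : Module.finrank Cq (Cq ⊗[R] C) = Module.finrank Cq (Cq ⊗[Rp] (Rp ⊗[R] C)) :=
      LinearEquiv.finrank_eq e2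
    have he3 : Module.finrank Cq (Cq ⊗[Rp] (Rp ⊗[R] C)) = Module.finrank Rp (Rp ⊗[R] C) :=
      Module.finrank_baseChange
    have he4 : Module.finrank Rp (Rp ⊗[R] C) = N := by
      rw [← rankAtStalk_eq_finrank_tensor]; exact hrank p
    rw [he1, he2, he3, he4]
  -- additivity of the rank in the decomposition
  have h2 : Module.finrank Cq (Cq ⊗[C] (C ⊗[R] C)) =
      Module.finrank Cq (Cq ⊗[C] C) + Module.finrank Cq (Cq ⊗[C] ((C ⊗[R] C) ⧸ J)) := by
    have hb : Module.finrank Cq (Cq ⊗[C] (C ⊗[R] C)) =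
        Module.finrank Cq (Cq ⊗[C] (C × ((C ⊗[R] C) ⧸ J))) :=
      LinearEquiv.finrank_eq (LinearEquiv.baseChange C Cq _ _ E.toLinearEquiv)
    have hpr : Module.finrank Cq (Cq ⊗[C] (C × ((C ⊗[R] C) ⧸ J))) =
        Module.finrank Cq ((Cq ⊗[C] C) × (Cq ⊗[C] ((C ⊗[R] C) ⧸ J))) :=
      LinearEquiv.finrank_eq (prodRightBase C Cq C ((C ⊗[R] C) ⧸ J))
    rw [hb, hpr, Module.finrank_prod]
  have h3 : Module.finrank Cq (Cq ⊗[C] C) = 1 := by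
    rw [LinearEquiv.finrank_eq (TensorProduct.AlgebraTensorModule.rid C Cq Cq),
      Module.finrank_self]
  have hfin : Module.rankAtStalk ((C ⊗[R] C) ⧸ J) q =
      Module.finrank Cq (Cq ⊗[C] ((C ⊗[R] C) ⧸ J)) :=
    rankAtStalk_eq_finrank_tensor C ((C ⊗[R] C) ⧸ J) q
  rw [hfin]
  rw [h2, h3] at h4
  omega
end

section
/- Let R be a commutative ring and V a finitely generated projective faithful R-module. Then End_R(V) is a separable R-algebra, i.e. End_R(V) is projective as a module over End_R(V) ⊗_R End_R(V)^op. -/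
open scoped TensorProduct

open Finset MulOpposite

section Helpers

variable {R V : Type} [CommRing R] [AddCommGroup V] [Module R V]

private lemma theta_mul_left (c : Module.End R V) (x : V) (g : V →ₗ[R] R) :
    c * g.smulRight x = g.smulRight (c x) := by
  ext v; simp [Module.End.mul_apply]

private lemma theta_mul_right (x : V) (g : V →ₗ[R] R) (c : Module.End R V) :
    g.smulRight x * c = (g ∘ₗ c).smulRight x := by
  ext v; simp [Module.End.mul_apply]

private lemma theta_mul_theta (x y : V) (g h : V →ₗ[R] R) :
    g.smulRight x * h.smulRight y = g y • h.smulRight x := by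
  ext v; simp [Module.End.mul_apply, smul_smul, mul_comm]

private lemma theta_add_right (g : V →ₗ[R] R) (x₁ x₂ : V) :
    g.smulRight (x₁ + x₂) = g.smulRight x₁ + g.smulRight x₂ := by
  ext v; simp [smul_add]

private lemma theta_smul_right (r : R) (g : V →ₗ[R] R) (x : V) :
    g.smulRight (r • x) = r • g.smulRight x := by
  ext v
  simp only [LinearMap.smulRight_apply, LinearMap.smul_apply]
  rw [smul_comm]

private lemma theta_add_left (g₁ g₂ : V →ₗ[R] R) (x : V) :
    (g₁ + g₂).smulRight x = g₁.smulRight x + g₂.smulRight x := by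
  ext v; simp [add_smul]

private lemma theta_smul_left (r : R) (g : V →ₗ[R] R) (x : V) :
    (r • g).smulRight x = r • g.smulRight x := by
  ext v; simp [mul_smul]

private lemma casimir {n : ℕ} (x : Fin n → V) (f : Fin n → (V →ₗ[R] R))
    (hdual : ∀ v, ∑ i, f i v • x i = v)
    {M : Type} [AddCommGroup M] [Module R M]
    (Φ : V →ₗ[R] (V →ₗ[R] R) →ₗ[R] M) (c : Module.End R V) :
    ∑ i, Φ (c (x i)) (f i) = ∑ i, Φ (x i) (f i ∘ₗ c) := by
  have h1 : ∀ i, (f i ∘ₗ c : V →ₗ[R] R) = ∑ j, f i (c (x j)) • f j := by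
    intro i; ext v
    conv_lhs => rw [LinearMap.comp_apply, ← hdual v]
    simp [mul_comm]
  calc ∑ i, Φ (c (x i)) (f i)
      = ∑ i, ∑ j, f j (c (x i)) • Φ (x j) (f i) := by
        refine Finset.sum_congr rfl fun i _ => ?_
        conv_lhs => rw [← hdual (c (x i))]
        simp
    _ = ∑ j, ∑ i, f j (c (x i)) • Φ (x j) (f i) := Finset.sum_comm
    _ = ∑ i, Φ (x i) (f i ∘ₗ c) := by
        refine Finset.sum_congr rfl fun j _ => ?_
        rw [h1]; simp

end Helpers

/-- An `R`-algebra `B` is *separable* if `B` is projective as a module over its enveloping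
algebra `B ⊗[R] Bᵐᵒᵖ`, acting by `(a ⊗ b) • x = a * x * b`. -/
def IsSeparableAlgebra (R B : Type) [CommRing R] [Ring B] [Algebra R B] : Prop :=
  letI : Module (B ⊗[R] Bᵐᵒᵖ) B := TensorProduct.Algebra.module
  Module.Projective (B ⊗[R] Bᵐᵒᵖ) B

set_option synthInstance.maxHeartbeats 1000000 in
set_option maxHeartbeats 1000000 in
/-- A separability idempotent `∑ i, a i ⊗ op (b i)` makes `B` a separable `R`-algebra. -/
private lemma isSeparableAlgebra_of_idem (R B : Type) [CommRing R] [Ring B] [Algebra R B]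
    {ι : Type} [Fintype ι] (a b : ι → B) (h1 : ∑ i, a i * b i = 1)
    (hc : ∀ c : B, ∑ i, (c * a i) ⊗ₜ[R] op (b i) = ∑ i, a i ⊗ₜ[R] op (b i * c)) :
    IsSeparableAlgebra R B := by
  letI : Module (B ⊗[R] Bᵐᵒᵖ) B := TensorProduct.Algebra.module
  set σfun : B → B ⊗[R] Bᵐᵒᵖ := fun t => ∑ i, (t * a i) ⊗ₜ[R] op (b i) with hσ
  have hσ_add : ∀ t s, σfun (t + s) = σfun t + σfun s := by
    intro t s
    simp only [hσ, add_mul, TensorProduct.add_tmul, Finset.sum_add_distrib]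
  have hc' : ∀ u c : B, ∑ i, (u * (c * a i)) ⊗ₜ[R] op (b i)
      = ∑ i, (u * a i) ⊗ₜ[R] op (b i * c) := by
    intro u c
    have h := congrArg (fun z => (u ⊗ₜ[R] (1 : Bᵐᵒᵖ)) * z) (hc c)
    simpa [Finset.mul_sum, Algebra.TensorProduct.tmul_mul_tmul] using h
  have hσ_smul : ∀ (z : B ⊗[R] Bᵐᵒᵖ) (t : B), σfun (z • t) = z * σfun t := by
    intro z t
    induction z using TensorProduct.induction_on with
    | zero =>
      have h0 : (0 : B ⊗[R] Bᵐᵒᵖ) • t = 0 := by exact zero_smul (B ⊗[R] Bᵐᵒᵖ) t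
      erw [h0, zero_mul, hσ]; simp
    | add z₁ z₂ hz₁ hz₂ =>
      have h' : (z₁ + z₂) • t = z₁ • t + z₂ • t := add_smul z₁ z₂ t
      rw [h', hσ_add, hz₁, hz₂, add_mul]
    | tmul p q =>
      have hpq : (p ⊗ₜ[R] q) • t = p * (t * unop q) := by
        rw [TensorProduct.Algebra.smul_def, smul_eq_mul, MulOpposite.smul_eq_mul_unop]
      rw [hpq, hσ]
      dsimp only
      calc ∑ i, (p * (t * unop q) * a i) ⊗ₜ[R] op (b i)
          = ∑ i, ((p * t) * (unop q * a i)) ⊗ₜ[R] op (b i) := by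
            refine Finset.sum_congr rfl fun i _ => ?_
            rw [← mul_assoc p t, mul_assoc (p * t)]
        _ = ∑ i, ((p * t) * a i) ⊗ₜ[R] op (b i * unop q) := hc' (p * t) (unop q)
        _ = (p ⊗ₜ[R] q) * ∑ i, (t * a i) ⊗ₜ[R] op (b i) := by
            rw [Finset.mul_sum]
            refine Finset.sum_congr rfl fun i _ => ?_
            rw [Algebra.TensorProduct.tmul_mul_tmul, ← mul_assoc, ← op_unop q, ← op_mul, unop_op]
  let σ : B →ₗ[B ⊗[R] Bᵐᵒᵖ] B ⊗[R] Bᵐᵒᵖ :=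
    { toFun := σfun
      map_add' := hσ_add
      map_smul' := fun z t => by rw [RingHom.id_apply, smul_eq_mul]; exact hσ_smul z t }
  let μ := LinearMap.toSpanSingleton (B ⊗[R] Bᵐᵒᵖ) B 1
  have hcomp : μ.comp σ = LinearMap.id := by
    ext t
    show σfun t • (1 : B) = t
    rw [hσ]
    dsimp only
    rw [Finset.sum_smul]
    have h2 : ∀ i, ((t * a i) ⊗ₜ[R] op (b i)) • (1 : B) = t * (a i * b i) := by
      intro i
      rw [TensorProduct.Algebra.smul_def, MulOpposite.smul_eq_mul_unop, unop_op,
        smul_eq_mul, one_mul, mul_assoc]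
    rw [Finset.sum_congr rfl fun i _ => h2 i, ← Finset.mul_sum, h1, mul_one]
  exact Module.Projective.of_split σ μ hcomp

/-- For a finitely generated projective faithful `R`-module `V`, the
endomorphism algebra `End_R(V)` is a separable `R`-algebra. -/
theorem isSeparableAlgebra_end
    (R V : Type) [CommRing R] [AddCommGroup V] [Module R V]
    [Module.Finite R V] [Module.Projective R V] [FaithfulSMul R V] :
    IsSeparableAlgebra R (Module.End R V) := by
  classical
  obtain ⟨n, p, q, hsurj, hinj, hpq⟩ := Module.Finite.exists_comp_eq_id_of_projective R V
  set x : Fin n → V := fun i => p (fun j => if i = j then 1 else 0) with hx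
  set f : Fin n → (V →ₗ[R] R) := fun i => (LinearMap.proj i) ∘ₗ q with hf
  have hdual : ∀ v : V, ∑ i, f i v • x i = v := by
    intro v
    have h := LinearMap.pi_apply_eq_sum_univ p (q v)
    have hpqv : p (q v) = v := by
      have := LinearMap.congr_fun hpq v
      simpa using this
    rw [hpqv] at h
    simp only [hf, hx, LinearMap.comp_apply, LinearMap.proj_apply]
    exact h.symm
  -- the trace ideal is everything
  set φ : (Fin n → V) →ₗ[R] R := ∑ i, (f i) ∘ₗ (LinearMap.proj i) with hφ
  have hmem : ∀ i (v : V), f i v ∈ LinearMap.range φ := by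
    intro i v
    refine ⟨Pi.single i v, ?_⟩
    rw [hφ]
    simp only [LinearMap.sum_apply, LinearMap.comp_apply, LinearMap.proj_apply]
    rw [Finset.sum_eq_single i]
    · simp
    · intro j _ hj; simp [Pi.single_eq_of_ne hj]
    · simp
  have htop : (⊤ : Submodule R V) ≤ (LinearMap.range φ) • ⊤ := by
    intro v _
    rw [← hdual v]
    exact Submodule.sum_mem _ fun i _ =>
      Submodule.smul_mem_smul (hmem i v) Submodule.mem_top
  obtain ⟨r, hr1, hr0⟩ := Submodule.exists_sub_one_mem_and_smul_eq_zero_of_fg_of_le_smul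
    (LinearMap.range φ) ⊤ Module.Finite.fg_top htop
  have hr : r = 0 := by
    refine eq_of_smul_eq_smul (M := R) (α := V) fun v => ?_
    rw [hr0 v Submodule.mem_top, zero_smul]
  rw [hr, zero_sub] at hr1
  have h1 : (1 : R) ∈ LinearMap.range φ := by
    have := neg_mem hr1; simpa using this
  obtain ⟨w, hw⟩ := h1
  rw [hφ] at hw
  simp only [LinearMap.sum_apply, LinearMap.comp_apply, LinearMap.proj_apply] at hw
  -- hw : ∑ i, f i (w i) = 1
  refine isSeparableAlgebra_of_idem R (Module.End R V)
    (ι := Fin n × Fin n)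
    (fun ik => (f ik.2).smulRight (x ik.1))
    (fun ik => (f ik.1).smulRight (w ik.2)) ?_ ?_
  · rw [Fintype.sum_prod_type]
    have h2 : ∀ i k, ((f k).smulRight (x i) : Module.End R V) * (f i).smulRight (w k)
        = f k (w k) • (f i).smulRight (x i) := fun i k => theta_mul_theta (x i) (w k) (f k) (f i)
    calc ∑ i, ∑ k, ((f k).smulRight (x i) : Module.End R V) * (f i).smulRight (w k)
        = ∑ i, ∑ k, f k (w k) • ((f i).smulRight (x i) : Module.End R V) :=
          Finset.sum_congr rfl fun i _ => Finset.sum_congr rfl fun k _ => h2 i k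
      _ = ∑ i, ((f i).smulRight (x i) : Module.End R V) := by
          refine Finset.sum_congr rfl fun i _ => ?_
          rw [← Finset.sum_smul, hw, one_smul]
      _ = 1 := by ext v; simpa using hdual v
  · intro c
    rw [Fintype.sum_prod_type, Fintype.sum_prod_type]
    conv_lhs => rw [Finset.sum_comm]
    conv_rhs => rw [Finset.sum_comm]
    refine Finset.sum_congr rfl fun k _ => ?_
    dsimp only
    have key := casimir x f hdual
      (LinearMap.mk₂ R
        (fun x' f' => (((f k).smulRight x' : Module.End R V)) ⊗ₜ[R]
          op ((f'.smulRight (w k)) : Module.End R V))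
        (fun x₁ x₂ f' => by
          rw [theta_add_right, TensorProduct.add_tmul])
        (fun r x' f' => by
          rw [theta_smul_right, TensorProduct.smul_tmul'])
        (fun x' f₁ f₂ => by
          rw [theta_add_left, op_add, TensorProduct.tmul_add])
        (fun x' r f' => by
          rw [theta_smul_left, op_smul, TensorProduct.tmul_smul]))
      c
    simp only [LinearMap.mk₂_apply] at key
    calc ∑ i, ((c * (f k).smulRight (x i)) : Module.End R V) ⊗ₜ[R]
          op ((f i).smulRight (w k) : Module.End R V)
        = ∑ i, ((f k).smulRight (c (x i)) : Module.End R V) ⊗ₜ[R]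
            op ((f i).smulRight (w k) : Module.End R V) := by
          refine Finset.sum_congr rfl fun i _ => ?_
          rw [theta_mul_left]
      _ = ∑ i, ((f k).smulRight (x i) : Module.End R V) ⊗ₜ[R]
            op (((f i) ∘ₗ c).smulRight (w k) : Module.End R V) := key
      _ = ∑ i, ((f k).smulRight (x i) : Module.End R V) ⊗ₜ[R]
            op (((f i).smulRight (w k) : Module.End R V) * c) := by
          refine Finset.sum_congr rfl fun i _ => ?_
          rw [theta_mul_right]
end
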